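/- If G is an edge-colored complete graph K_n using at least n+1 distinct colors, then G contains a properly colored 4-cycle, i.e., a cycle v1v2v3v4v1 in which each pair of consecutive edges receives distinct colors. -/
import Mathlib

open SimpleGraph Finset

/-- Number of edges of `G`. -/
noncomputable def eCount {V : Type*} (G : SimpleGraph V) : ℕ := G.edgeSet.ncard

/-- Number of distinct colors appearing on edges of `G` under coloring `χ`. -/
noncomputable def cCount {V : Type*} (G : SimpleGraph V) (χ : Sym2 V → ℕ) : ℕ := (χ '' G.edgeSet).ncard

/-- Color degree of `v`: number of distinct colors on edges incident to `v`. -/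
noncomputable def colorDeg {V : Type*} (G : SimpleGraph V) (χ : Sym2 V → ℕ) (v : V) : ℕ :=
  ((fun u => χ s(v, u)) '' G.neighborSet v).ncard

/-- `G` with coloring `χ` contains a rainbow triangle. -/
def HasRainbowTriangle {V : Type*} (G : SimpleGraph V) (χ : Sym2 V → ℕ) : Prop :=
  ∃ a b c : V, G.Adj a b ∧ G.Adj b c ∧ G.Adj a c ∧
    χ s(a, b) ≠ χ s(b, c) ∧ χ s(b, c) ≠ χ s(a, c) ∧ χ s(a, b) ≠ χ s(a, c)

/-- `G` with coloring `χ` contains a properly colored 4-cycle. -/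
def HasPCC4 {V : Type*} (G : SimpleGraph V) (χ : Sym2 V → ℕ) : Prop :=
  ∃ a b c d : V, a ≠ c ∧ b ≠ d ∧ G.Adj a b ∧ G.Adj b c ∧ G.Adj c d ∧ G.Adj d a ∧
    χ s(a, b) ≠ χ s(b, c) ∧ χ s(b, c) ≠ χ s(c, d) ∧
    χ s(c, d) ≠ χ s(d, a) ∧ χ s(d, a) ≠ χ s(a, b)

section Aux

variable {V : Type*}

/-- Color `c` is *private* to `v`: every edge colored `c` touches `v`. -/
def Pvt (χ : Sym2 V → ℕ) (v : V) (c : ℕ) : Prop :=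
  ∀ x y : V, x ≠ y → χ s(x, y) = c → v = x ∨ v = y

/-- `e` is the other endpoint of an edge at `v` whose color is private to `v`. -/
def PvtNbr (χ : Sym2 V → ℕ) (v e : V) : Prop := v ≠ e ∧ Pvt χ v (χ s(v, e))

/-- The set of colors used in the coloring that are private to `v`. -/
def PrivColors (χ : Sym2 V → ℕ) (v : V) : Set ℕ :=
  {c | (∃ x y : V, x ≠ y ∧ χ s(x, y) = c) ∧ Pvt χ v c}

lemma privColors_finite [Fintype V] (χ : Sym2 V → ℕ) (v : V) :
    (PrivColors χ v).Finite := by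
  apply (Set.finite_range χ).subset
  rintro c ⟨⟨x, y, _, h⟩, -⟩
  exact ⟨s(x, y), h⟩

lemma step1 (χ : Sym2 V → ℕ) (nopc : ¬ HasPCC4 (⊤ : SimpleGraph V) χ) {v a b : V}
    (hva : v ≠ a) (hvb : v ≠ b) (hab : a ≠ b)
    (pa : Pvt χ v (χ s(v, a))) (pb : Pvt χ v (χ s(v, b)))
    (hcc : χ s(v, a) ≠ χ s(v, b)) :
    ∀ x, x ≠ v → x ≠ a → x ≠ b → χ s(a, x) = χ s(b, x) := by
  intro x hxv hxa hxb
  by_contra hne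
  apply nopc
  refine ⟨v, a, x, b, hxv.symm, hab, by simpa using hva, by simpa using hxa.symm,
    by simpa using hxb, by simpa using hvb.symm, ?_, ?_, ?_, ?_⟩
  · intro h
    rcases pa a x hxa.symm h.symm with h' | h'
    · exact hva h'
    · exact hxv h'.symm
  · rw [Sym2.eq_swap (a := x) (b := b)]; exact hne
  · intro h
    rw [Sym2.eq_swap (a := b) (b := v)] at h
    rcases pb x b hxb h with h' | h'
    · exact hxv h'.symm
    · exact hvb h'
  · rw [Sym2.eq_swap]
    exact fun h => hcc h.symm

lemma step2' (χ : Sym2 V → ℕ) {u p q : V} (hup : u ≠ p) (huq : u ≠ q) (hpq : p ≠ q)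
    (eq3 : ∀ x, x ≠ u → x ≠ p → x ≠ q → χ s(p, x) = χ s(q, x)) :
    ∀ e, PvtNbr χ p e → e = u ∨ e = q := by
  rintro e ⟨hpe, hpvt⟩
  by_contra h
  push_neg at h
  have h1 : χ s(p, e) = χ s(q, e) := eq3 e h.1 (Ne.symm hpe) h.2
  rcases hpvt q e (fun he => h.2 he.symm) h1.symm with h' | h'
  · exact hpq h'
  · exact hpe h'

lemma twoPriv [Fintype V] (χ : Sym2 V → ℕ) (v : V)
    (h2 : 2 ≤ (PrivColors χ v).ncard) :
    ∃ a b : V, v ≠ a ∧ v ≠ b ∧ a ≠ b ∧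
      Pvt χ v (χ s(v, a)) ∧ Pvt χ v (χ s(v, b)) ∧ χ s(v, a) ≠ χ s(v, b) := by
  have hfin := privColors_finite χ v
  obtain ⟨c1, hc1, c2, hc2, hcc⟩ := (Set.one_lt_ncard hfin).mp (by omega)
  have get : ∀ c ∈ PrivColors χ v, ∃ a, v ≠ a ∧ χ s(v, a) = c := by
    rintro c ⟨⟨x, y, hxy, hc⟩, hpvt⟩
    rcases hpvt x y hxy hc with h | h
    · exact ⟨y, h ▸ hxy, h ▸ hc⟩
    · exact ⟨x, h ▸ hxy.symm, by rwa [Sym2.eq_swap, ← h] at hc⟩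
  obtain ⟨a, hva, ha⟩ := get c1 hc1
  obtain ⟨b, hvb, hb⟩ := get c2 hc2
  have hab : a ≠ b := by rintro rfl; exact hcc (ha ▸ hb ▸ rfl)
  exact ⟨a, b, hva, hvb, hab, ha ▸ hc1.2, hb ▸ hc2.2, by rw [ha, hb]; exact hcc⟩

lemma privEdges [Fintype V] (χ : Sym2 V → ℕ) {p u q : V}
    (hup : u ≠ p) (huq : u ≠ q) (hpq : p ≠ q)
    (eq3 : ∀ x, x ≠ u → x ≠ p → x ≠ q → χ s(p, x) = χ s(q, x))
    (h2 : 2 ≤ (PrivColors χ p).ncard) :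
    Pvt χ p (χ s(p, u)) ∧ Pvt χ p (χ s(p, q)) ∧ χ s(p, u) ≠ χ s(p, q) := by
  obtain ⟨a, b, hpa, hpb, hab, Pa, Pb, hcc⟩ := twoPriv χ p h2
  have conf := step2' χ hup huq hpq eq3
  rcases conf a ⟨hpa, Pa⟩ with rfl | rfl <;> rcases conf b ⟨hpb, Pb⟩ with rfl | rfl
  · exact absurd rfl hab
  · exact ⟨Pa, Pb, hcc⟩
  · exact ⟨Pb, Pa, hcc.symm⟩
  · exact absurd rfl hab

/-- The triangle structure at a vertex, when every vertex has two private colors. -/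
lemma tri [Fintype V] (χ : Sym2 V → ℕ) (nopc : ¬ HasPCC4 (⊤ : SimpleGraph V) χ)
    (hp : ∀ v, 2 ≤ (PrivColors χ v).ncard) (v : V) :
    ∃ a b : V, v ≠ a ∧ v ≠ b ∧ a ≠ b ∧
      (∀ x, x ≠ v → x ≠ a → x ≠ b → χ s(v, x) = χ s(a, x) ∧ χ s(v, x) = χ s(b, x)) ∧
      Pvt χ v (χ s(v, a)) ∧ Pvt χ a (χ s(v, a)) ∧
      Pvt χ v (χ s(v, b)) ∧ Pvt χ b (χ s(v, b)) ∧
      Pvt χ a (χ s(a, b)) ∧ Pvt χ b (χ s(a, b)) ∧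
      (∀ e, PvtNbr χ v e → e = a ∨ e = b) ∧
      (∀ e, PvtNbr χ a e → e = v ∨ e = b) ∧
      (∀ e, PvtNbr χ b e → e = v ∨ e = a) := by
  obtain ⟨a, b, hva, hvb, hab, Pva, Pvb, hcc⟩ := twoPriv χ v (hp v)
  have eq3ab : ∀ x, x ≠ v → x ≠ a → x ≠ b → χ s(a, x) = χ s(b, x) :=
    step1 χ nopc hva hvb hab Pva Pvb hcc
  have eq3ba : ∀ x, x ≠ v → x ≠ b → x ≠ a → χ s(b, x) = χ s(a, x) := by
    intro x h1 h2 h3; exact (eq3ab x h1 h3 h2).symm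
  -- private edges of a
  obtain ⟨Pav, Pab, hccA⟩ := privEdges χ hva hvb hab eq3ab (hp a)
  obtain ⟨Pbv, Pba, hccB⟩ := privEdges χ hvb hva hab.symm eq3ba (hp b)
  have Pav' : Pvt χ a (χ s(v, a)) := by rwa [Sym2.eq_swap] at Pav
  have Pbv' : Pvt χ b (χ s(v, b)) := by rwa [Sym2.eq_swap] at Pbv
  have Pba' : Pvt χ b (χ s(a, b)) := by rwa [Sym2.eq_swap] at Pba
  have eq3vb : ∀ x, x ≠ a → x ≠ v → x ≠ b → χ s(v, x) = χ s(b, x) :=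
    step1 χ nopc (Ne.symm hva) hab hvb Pav Pab hccA
  have eq3va : ∀ x, x ≠ b → x ≠ v → x ≠ a → χ s(v, x) = χ s(a, x) :=
    step1 χ nopc (Ne.symm hvb) hab.symm hva Pbv Pba hccB
  refine ⟨a, b, hva, hvb, hab, ?_, Pva, Pav', Pvb, Pbv', Pab, Pba', ?_, ?_, ?_⟩
  · intro x h1 h2 h3
    exact ⟨eq3va x h3 h1 h2, eq3vb x h2 h1 h3⟩
  · exact step2' χ (Ne.symm hva) hab hvb eq3vb
  · exact step2' χ hva hvb hab eq3ab
  · exact step2' χ hvb hva hab.symm eq3ba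

end Aux

section Aux2

variable {V : Type*}

lemma noPC_small [Fintype V] (χ : Sym2 V → ℕ) (h4 : 4 ≤ Fintype.card V)
    (hp : ∀ v, 2 ≤ (PrivColors χ v).ncard) : HasPCC4 (⊤ : SimpleGraph V) χ := by
  classical
  by_contra nopc
  obtain ⟨v⟩ : Nonempty V := Fintype.card_pos_iff.mp (by omega)
  obtain ⟨a, b, hva, hvb, hab, e3, Pva_v, Pva_a, Pvb_v, Pvb_b, Pab_a, Pab_b, cv, ca, cb⟩ :=
    tri χ nopc hp v
  obtain ⟨y, hy⟩ : ∃ y : V, y ∉ ({v, a, b} : Finset V) := by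
    by_contra h
    push_neg at h
    have : (Finset.univ : Finset V) ⊆ {v, a, b} := fun x _ => h x
    have := Finset.card_le_card this
    simp only [Finset.card_univ] at this
    have h3 : ({v, a, b} : Finset V).card ≤ 3 := by
      apply le_trans (Finset.card_insert_le _ _)
      have := Finset.card_insert_le a ({b} : Finset V)
      simp at this ⊢
      omega
    omega
  simp only [Finset.mem_insert, Finset.mem_singleton, not_or] at hy
  obtain ⟨hyv, hya, hyb⟩ := hy
  obtain ⟨p, q, hyp, hyq, hpq, e3y, Pyp_y, Pyp_p, Pyq_y, Pyq_q, Ppq_p, Ppq_q, cy, cp, cq⟩ :=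
    tri χ nopc hp y
  -- swapped private facts
  have Pva_a' : Pvt χ a (χ s(a, v)) := by rwa [Sym2.eq_swap] at Pva_a
  have Pvb_b' : Pvt χ b (χ s(b, v)) := by rwa [Sym2.eq_swap] at Pvb_b
  have Pab_b' : Pvt χ b (χ s(b, a)) := by rwa [Sym2.eq_swap] at Pab_b
  -- a generic elimination: if t's private neighbours are confined to {y, z} but
  -- t has two private neighbours w1 ≠ w2 both different from y, contradiction
  have elim : ∀ {t z w1 w2 : V}, (∀ e, PvtNbr χ t e → e = y ∨ e = z) →
      PvtNbr χ t w1 → PvtNbr χ t w2 → w1 ≠ y → w2 ≠ y → w1 ≠ w2 → False := by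
    intro t z w1 w2 conf h1 h2 n1 n2 n12
    rcases conf w1 h1 with rfl | rfl
    · exact n1 rfl
    · rcases conf w2 h2 with rfl | rfl
      · exact n2 rfl
      · exact n12 rfl
  have houtside : ∀ {z w : V}, (∀ e, PvtNbr χ z e → e = y ∨ e = w) →
      z ≠ v ∧ z ≠ a ∧ z ≠ b := by
    intro z w conf
    refine ⟨?_, ?_, ?_⟩
    · rintro rfl
      exact elim conf ⟨hva, Pva_v⟩ ⟨hvb, Pvb_v⟩ (fun h => hya h.symm) (fun h => hyb h.symm) hab
    · rintro rfl
      exact elim conf ⟨Ne.symm hva, Pva_a'⟩ ⟨hab, Pab_a⟩ (fun h => hyv h.symm)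
        (fun h => hyb h.symm) (fun h => hvb h)
    · rintro rfl
      exact elim conf ⟨Ne.symm hvb, Pvb_b'⟩ ⟨Ne.symm hab, Pab_b'⟩ (fun h => hyv h.symm)
        (fun h => hya h.symm) hva
  obtain ⟨hpv, hpa, hpb⟩ := houtside cp
  obtain ⟨hqv, hqa, hqb⟩ := houtside cq
  -- now build the properly colored C4  y - p - v - a - y
  apply nopc
  refine ⟨y, p, v, a, hyv, fun h => hpa h, by simpa using hyp, by simpa using hpv,
    by simpa using hva, by simpa using (fun h => hya h.symm : a ≠ y), ?_, ?_, ?_, ?_⟩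
  · intro h
    rcases Pyp_y p v hpv h.symm with h' | h'
    · exact hyp h'
    · exact hyv h'
  · have hpva : χ s(v, p) = χ s(a, p) := (e3 p hpv hpa hpb).1
    intro h
    rw [Sym2.eq_swap (a := p) (b := v)] at h
    rcases Pva_v a p (Ne.symm hpa) (hpva.symm.trans h) with h' | h'
    · exact hva h'
    · exact hpv h'.symm
  · intro h
    rcases Pva_v a y (Ne.symm hya) h.symm with h' | h'
    · exact hva h'
    · exact hyv h'.symm
  · have haypa : χ s(y, a) = χ s(p, a) := (e3y a (fun h => hya h.symm) (fun h => hpa h.symm)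
      (fun h => hqa h.symm)).1
    intro h
    rw [Sym2.eq_swap (a := a) (b := y)] at h
    rcases Pyp_y p a hpa (haypa.symm.trans h) with h' | h'
    · exact hyp h'
    · exact hya h'

end Aux2

section Aux3

variable {V : Type*}

lemma lift_pcc4 {v : V} (χ : Sym2 V → ℕ)
    (h : HasPCC4 (⊤ : SimpleGraph {x : V // x ≠ v}) (fun e => χ (Sym2.map Subtype.val e))) :
    HasPCC4 (⊤ : SimpleGraph V) χ := by
  obtain ⟨a, b, c, d, hac, hbd, h1, h2, h3, h4, c1, c2, c3, c4⟩ := h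
  simp only [top_adj] at h1 h2 h3 h4
  refine ⟨a.val, b.val, c.val, d.val, Subtype.coe_ne_coe.mpr hac, Subtype.coe_ne_coe.mpr hbd,
    by simpa using Subtype.coe_ne_coe.mpr h1, by simpa using Subtype.coe_ne_coe.mpr h2,
    by simpa using Subtype.coe_ne_coe.mpr h3, by simpa using Subtype.coe_ne_coe.mpr h4,
    ?_, ?_, ?_, ?_⟩
  · simpa [Sym2.map_pair_eq] using c1
  · simpa [Sym2.map_pair_eq] using c2
  · simpa [Sym2.map_pair_eq] using c3
  · simpa [Sym2.map_pair_eq] using c4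

lemma decomp [Fintype V] (χ : Sym2 V → ℕ) (v : V) :
    cCount (⊤ : SimpleGraph V) χ ≤
      cCount (⊤ : SimpleGraph {x : V // x ≠ v}) (fun e => χ (Sym2.map Subtype.val e))
        + (PrivColors χ v).ncard := by
  classical
  set A : Set ℕ :=
    (fun e => χ (Sym2.map Subtype.val e)) '' (⊤ : SimpleGraph {x : V // x ≠ v}).edgeSet with hA
  have hsub : χ '' (⊤ : SimpleGraph V).edgeSet ⊆ A ∪ PrivColors χ v := by
    rintro c ⟨e, he, rfl⟩
    revert he
    induction e using Sym2.inductionOn with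
    | hf x y =>
      intro he
      have hxy : x ≠ y := by simpa using he
      by_cases hP : Pvt χ v (χ s(x, y))
      · exact Or.inr ⟨⟨x, y, hxy, rfl⟩, hP⟩
      · left
        rw [Pvt] at hP
        push_neg at hP
        obtain ⟨x', y', hxy', hc, hvx, hvy⟩ := hP
        refine ⟨s(⟨x', fun h => hvx h.symm⟩, ⟨y', fun h => hvy h.symm⟩), ?_, ?_⟩
        · simp [Subtype.ext_iff, hxy']
        · simpa [Sym2.map_pair_eq] using hc
  calc cCount (⊤ : SimpleGraph V) χ ≤ (A ∪ PrivColors χ v).ncard :=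
        Set.ncard_le_ncard hsub (((Set.toFinite _).image _).union (privColors_finite χ v))
    _ ≤ _ := Set.ncard_union_le _ _

lemma cCount_le_small [Fintype V] (χ : Sym2 V → ℕ) (h : Fintype.card V ≤ 3) :
    cCount (⊤ : SimpleGraph V) χ ≤ Fintype.card V := by
  classical
  have h1 : cCount (⊤ : SimpleGraph V) χ ≤ (⊤ : SimpleGraph V).edgeSet.ncard :=
    Set.ncard_image_le (Set.toFinite _)
  have h2 : (⊤ : SimpleGraph V).edgeSet.ncard = (Fintype.card V).choose 2 := by
    rw [← SimpleGraph.card_edgeFinset_top_eq_card_choose_two, SimpleGraph.edgeFinset,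
      ← Set.ncard_eq_toFinset_card']
  have h3 : (Fintype.card V).choose 2 ≤ Fintype.card V := by
    interval_cases h : Fintype.card V <;> decide
  omega

end Aux3

lemma main_aux : ∀ (n : ℕ) (V : Type u) [Fintype V], Fintype.card V = n →
    ∀ χ : Sym2 V → ℕ, ¬ HasPCC4 (⊤ : SimpleGraph V) χ →
      cCount (⊤ : SimpleGraph V) χ ≤ n := by
  intro n
  induction n with
  | zero =>
    intro V _ hcard χ _
    have := cCount_le_small χ (le_trans hcard.le (by omega))
    omega
  | succ m ih =>
    intro V _ hcard χ nopc
    by_cases h3 : Fintype.card V ≤ 3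
    · have := cCount_le_small χ h3; omega
    push_neg at h3
    by_cases hall : ∀ v, 2 ≤ (PrivColors χ v).ncard
    · exact absurd (noPC_small χ (by omega) hall) nopc
    push_neg at hall
    obtain ⟨v, hv⟩ := hall
    classical
    have hcard' : Fintype.card {x : V // x ≠ v} = m := by
      have := Fintype.card_subtype_compl (p := fun x : V => x = v)
      rw [Fintype.card_subtype_eq] at this
      simp only [ne_eq]
      omega
    have nopc' : ¬ HasPCC4 (⊤ : SimpleGraph {x : V // x ≠ v})
        (fun e => χ (Sym2.map Subtype.val e)) := fun h => nopc (lift_pcc4 χ h)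
    have hih := ih {x : V // x ≠ v} hcard' _ nopc'
    have hd := decomp χ v
    omega

/-- An edge-colored complete graph `K_n` using at least `n + 1` colors contains a
properly colored `C₄`. -/
theorem stmt_2 {V : Type*} [Fintype V] (χ : Sym2 V → ℕ)
    (hc : Fintype.card V + 1 ≤ cCount (⊤ : SimpleGraph V) χ) :
    HasPCC4 (⊤ : SimpleGraph V) χ := by
  by_contra h
  have := main_aux (Fintype.card V) V rfl χ h
  omega
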